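/- Every triangle-free graph of tree-width at most t (t a positive integer) has chromatic number at most ⌈(t+3)/2⌉. -/

import Mathlib

open Finset SimpleGraph

set_option linter.unusedSectionVars false
set_option maxHeartbeats 1000000

section Tk

lemma claimC2 {κ W : Type} [DecidableEq κ] [Fintype κ] [DecidableEq W] :
    ∀ (X : Finset κ), 3 ≤ X.card → ∀ (F : κ → κ → W),
    (∑ y : κ, ((X.erase y).image (F y)).card ≤ Fintype.card κ + X.card - 3) →
    ∃ ξ : κ → κ, (∀ y, ξ y ∈ X.erase y) ∧
      ∀ y y', y ≠ y' → ∃ x, x ∈ X.erase y ∧ x ∈ X.erase y' ∧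
        F y x = F y (ξ y) ∧ F y' x = F y' (ξ y') := by
  intro X
  induction X using Finset.strongInduction with
  | _ X ih =>
  intro hk F hcard
  set c := Fintype.card κ with hc
  have herase_card : ∀ y : κ, 2 ≤ (X.erase y).card := by
    intro y
    by_cases hy : y ∈ X
    · rw [Finset.card_erase_of_mem hy]; omega
    · rw [Finset.erase_eq_of_notMem hy]; omega
  have hw1 : ∀ y : κ, 1 ≤ ((X.erase y).image (F y)).card := by
    intro y
    have h1 : 0 < (X.erase y).card := by have := herase_card y; omega
    have := Finset.Nonempty.image (Finset.card_pos.mp h1) (F y)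
    exact Finset.card_pos.mpr this
  by_cases hsing : ∃ y xh, xh ∈ X.erase y ∧ ∀ x ∈ (X.erase y).erase xh, F y x ≠ F y xh
  · -- Case A : delete the element xh with a singleton fiber
    obtain ⟨y₀, xh, hxh, huniq⟩ := hsing
    -- class y₀ has image of size ≥ 2
    obtain ⟨x₁, hx₁⟩ : ∃ x₁, x₁ ∈ (X.erase y₀).erase xh := by
      have h1 : 0 < ((X.erase y₀).erase xh).card := by
        have := herase_card y₀
        have := Finset.card_erase_of_mem hxh
        omega
      exact Finset.card_pos.mp h1
    have h2 : 2 ≤ ((X.erase y₀).image (F y₀)).card := by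
      refine Finset.one_lt_card.mpr ⟨F y₀ x₁, Finset.mem_image_of_mem _ (Finset.mem_of_mem_erase hx₁),
        F y₀ xh, Finset.mem_image_of_mem _ hxh, huniq x₁ hx₁⟩
    -- hence 4 ≤ |X|
    have hk4 : 4 ≤ X.card := by
      have hA : ((X.erase y₀).image (F y₀)).card
            + ∑ y ∈ Finset.univ.erase y₀, ((X.erase y).image (F y)).card
          = ∑ y : κ, ((X.erase y).image (F y)).card :=
        Finset.add_sum_erase Finset.univ (fun y => ((X.erase y).image (F y)).card) (Finset.mem_univ y₀)
      have hB : (Finset.univ.erase y₀).card • 1 ≤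
          ∑ y ∈ Finset.univ.erase y₀, ((X.erase y).image (F y)).card :=
        Finset.card_nsmul_le_sum _ _ _ (fun x _ => hw1 x)
      have hcu : (Finset.univ.erase y₀).card = c - 1 :=
        by rw [Finset.card_erase_of_mem (Finset.mem_univ y₀)]; rfl
      have hc1 : 1 ≤ c := Fintype.card_pos_iff.mpr ⟨y₀⟩
      rw [hcu] at hB
      simp only [smul_eq_mul, mul_one] at hB
      omega
    set X' := X.erase xh with hX'
    have hX'sub : X' ⊂ X := Finset.erase_ssubset (Finset.mem_of_mem_erase hxh)
    have hX'card : X'.card = X.card - 1 :=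
      Finset.card_erase_of_mem (Finset.mem_of_mem_erase hxh)
    have hsubE : ∀ y, X'.erase y ⊆ X.erase y := fun y =>
      Finset.erase_subset_erase y (Finset.erase_subset xh X)
    have hub : ∀ y, ((X'.erase y).image (F y)).card ≤ ((X.erase y).image (F y)).card :=
      fun y => Finset.card_le_card (Finset.image_subset_image (hsubE y))
    have hub0 : ((X'.erase y₀).image (F y₀)).card + 1 ≤ ((X.erase y₀).image (F y₀)).card := by
      have hsub : (X'.erase y₀).image (F y₀) ⊆
          ((X.erase y₀).image (F y₀)).erase (F y₀ xh) := by
        intro a ha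
        obtain ⟨x, hx, rfl⟩ := Finset.mem_image.mp ha
        have hx' : x ∈ (X.erase y₀).erase xh := by
          rw [hX', Finset.erase_right_comm] at hx; exact hx
        exact Finset.mem_erase.mpr ⟨huniq x hx',
          Finset.mem_image_of_mem _ (Finset.mem_of_mem_erase hx')⟩
      have h3 := Finset.card_le_card hsub
      rw [Finset.card_erase_of_mem (Finset.mem_image_of_mem _ hxh)] at h3
      omega
    have hcard' : ∑ y : κ, ((X'.erase y).image (F y)).card ≤ c + X'.card - 3 := by
      have hA : ((X'.erase y₀).image (F y₀)).card
            + ∑ y ∈ Finset.univ.erase y₀, ((X'.erase y).image (F y)).card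
          = ∑ y : κ, ((X'.erase y).image (F y)).card :=
        Finset.add_sum_erase Finset.univ (fun y => ((X'.erase y).image (F y)).card) (Finset.mem_univ y₀)
      have hB : ((X.erase y₀).image (F y₀)).card
            + ∑ y ∈ Finset.univ.erase y₀, ((X.erase y).image (F y)).card
          = ∑ y : κ, ((X.erase y).image (F y)).card :=
        Finset.add_sum_erase Finset.univ (fun y => ((X.erase y).image (F y)).card) (Finset.mem_univ y₀)
      have hC : ∑ y ∈ Finset.univ.erase y₀, ((X'.erase y).image (F y)).card ≤
          ∑ y ∈ Finset.univ.erase y₀, ((X.erase y).image (F y)).card :=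
        Finset.sum_le_sum (fun y _ => hub y)
      omega
    obtain ⟨ξ, hξ1, hξ2⟩ := ih X' hX'sub (by omega) F hcard'
    refine ⟨ξ, fun y => hsubE y (hξ1 y), ?_⟩
    intro y y' hne
    obtain ⟨x, hx1, hx2, he1, he2⟩ := hξ2 y y' hne
    exact ⟨x, hsubE y hx1, hsubE y' hx2, he1, he2⟩
  · -- Case B : no singleton fibers
    push_neg at hsing
    -- there is a class xs ∈ X whose image is a single value
    obtain ⟨xs, hxs, hxsw⟩ : ∃ xs ∈ X, ((X.erase xs).image (F xs)).card ≤ 1 := by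
      by_contra h
      push_neg at h
      have hX2 : ∀ x ∈ X, 2 ≤ ((X.erase x).image (F x)).card := fun x hx => h x hx
      have hsplit : ∑ y ∈ X, ((X.erase y).image (F y)).card
          + ∑ y ∈ Xᶜ, ((X.erase y).image (F y)).card
          = ∑ y : κ, ((X.erase y).image (F y)).card :=
        Finset.sum_add_sum_compl X _
      have h1 : X.card • 2 ≤ ∑ y ∈ X, ((X.erase y).image (F y)).card :=
        Finset.card_nsmul_le_sum _ _ _ hX2
      have h2 : (Xᶜ).card • 1 ≤ ∑ y ∈ Xᶜ, ((X.erase y).image (F y)).card :=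
        Finset.card_nsmul_le_sum _ _ _ (fun x _ => hw1 x)
      have h3 : (Xᶜ).card = c - X.card := by
        rw [Finset.card_compl]
      have h4 : X.card ≤ c := Finset.card_le_univ X
      simp only [smul_eq_mul, mul_one] at h1 h2
      omega
    obtain ⟨x₀, hx₀⟩ : ∃ x₀, x₀ ∈ X.erase xs := by
      have := herase_card xs; exact Finset.card_pos.mp (by omega)
    classical
    refine ⟨fun y => if y = xs then x₀ else xs, ?_, ?_⟩
    · intro y
      by_cases hy : y = xs
      · simp only [hy, if_pos rfl]; exact hx₀
      · simp only [if_neg hy]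
        exact Finset.mem_erase.mpr ⟨fun h => hy h.symm, hxs⟩
    · intro y y' hne
      have key : ∀ y : κ, y ≠ xs → ∃ x, x ∈ X.erase y ∧ x ∈ X.erase xs ∧
          F y x = F y xs ∧ F xs x = F xs x₀ := by
        intro y hy
        have hxsy : xs ∈ X.erase y := Finset.mem_erase.mpr ⟨fun h => hy h.symm, hxs⟩
        obtain ⟨x, hx, hFx⟩ := hsing y xs hxsy
        have hxX : x ∈ X.erase y := Finset.mem_of_mem_erase hx
        have hxxs : x ∈ X.erase xs := by
          refine Finset.mem_erase.mpr ⟨(Finset.mem_erase.mp hx).1, Finset.mem_of_mem_erase hxX⟩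
        refine ⟨x, hxX, hxxs, hFx, ?_⟩
        exact Finset.card_le_one.mp hxsw _ (Finset.mem_image_of_mem _ hxxs) _
          (Finset.mem_image_of_mem _ hx₀)
      by_cases hy : y = xs
      · rw [hy] at hne ⊢
        have hy' : y' ≠ xs := fun h => hne h.symm
        obtain ⟨x, hxX, hxxs, hF1, hF2⟩ := key y' hy'
        refine ⟨x, hxxs, hxX, ?_, ?_⟩
        · simp only [if_pos rfl]; exact hF2
        · simp only [if_neg hy']; exact hF1
      · by_cases hy' : y' = xs
        · rw [hy'] at hne ⊢
          obtain ⟨x, hxX, hxxs, hF1, hF2⟩ := key y hy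
          refine ⟨x, hxX, hxxs, ?_, ?_⟩
          · simp only [if_neg hy]; exact hF1
          · simp only [if_pos rfl]; exact hF2
        · refine ⟨xs, Finset.mem_erase.mpr ⟨fun h => hy h.symm, hxs⟩,
            Finset.mem_erase.mpr ⟨fun h => hy' h.symm, hxs⟩, ?_, ?_⟩
          · simp only [if_neg hy]
          · simp only [if_neg hy']

end Tk

section Col

section Defs
variable {V : Type} (G : SimpleGraph V)

/-- `I` is an independent set of `G`. -/
def IndSet (I : Finset V) : Prop := ∀ a ∈ I, ∀ b ∈ I, a ≠ b → ¬ G.Adj a b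

/-- `φ` is a proper coloring on `A` in which no independent subset of `A`
receives all `c` colors. -/
def GoodOn (c : ℕ) (φ : V → Fin c) (A : Finset V) : Prop :=
  (∀ a ∈ A, ∀ b ∈ A, G.Adj a b → φ a ≠ φ b) ∧
  (∀ I ⊆ A, IndSet G I → (I.image φ).card < c)

end Defs

lemma GoodOn.mono {V : Type} {G : SimpleGraph V} {c : ℕ} {φ : V → Fin c} {A A' : Finset V}
    (h : GoodOn G c φ A) (hsub : A' ⊆ A) : GoodOn G c φ A' :=
  ⟨fun a ha b hb => h.1 a (hsub ha) b (hsub hb),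
   fun I hI => h.2 I (hI.trans hsub)⟩

lemma claimC2' {κ W : Type} [DecidableEq κ] [Fintype κ] [DecidableEq W]
    (X : Finset κ) (hk : 3 ≤ X.card) (F : κ → κ → W)
    (hcard : ∑ y : κ, ((X.erase y).image (F y)).card ≤ Fintype.card κ + X.card - 3) :
    ∃ ξ : κ → κ, (∀ y, ξ y ∈ X.erase y) ∧
      ∀ y y', y ≠ y' → ∃ x, x ∈ X.erase y ∧ x ∈ X.erase y' ∧
        F y x = F y (ξ y) ∧ F y' x = F y' (ξ y') :=
  claimC2 X hk F hcard

/-- The key greedy step: a good partial coloring on `A` can be extended to one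
more vertex `u` of the bag `B`. -/
lemma exists_extend_color {V : Type} [DecidableEq V] {G : SimpleGraph V}
    (hfree : G.CliqueFree 3) {c : ℕ} (hc : 1 ≤ c) {B A : Finset V} (hAB : A ⊆ B)
    (hB : B.card ≤ 2 * c - 2) {u : V} (huB : u ∈ B) (huA : u ∉ A) (φ : V → Fin c)
    (hgood : GoodOn G c φ A) :
    ∃ x : Fin c, GoodOn G c (Function.update φ u x) (insert u A) := by
  classical
  set N := A.filter (fun a => G.Adj u a) with hNdef
  have hNmem : ∀ a ∈ N, G.Adj u a := fun a ha => (mem_filter.mp ha).2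
  have hNA : N ⊆ A := filter_subset _ _
  have hNind : IndSet G N := by
    intro a ha b hb hab hadj
    exact hfree {u, a, b} (SimpleGraph.is3Clique_triple_iff.mpr
      ⟨hNmem a ha, hNmem b hb, hadj⟩)
  have hS : (N.image φ).card < c := hgood.2 N hNA hNind
  by_contra hbad
  push_neg at hbad
  -- properness is automatic for colors outside φ(N)
  have hproper : ∀ x : Fin c, x ∉ N.image φ →
      ∀ a ∈ insert u A, ∀ b ∈ insert u A, G.Adj a b →
        Function.update φ u x a ≠ Function.update φ u x b := by
    intro x hx a ha b hb hadj
    rcases mem_insert.mp ha with rfl | ha'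
    · rcases mem_insert.mp hb with rfl | hb'
      · exact absurd hadj (G.irrefl)
      · have hbu : b ≠ a := fun h => huA (h ▸ hb')
        rw [Function.update_self, Function.update_of_ne hbu]
        intro he
        exact hx (he ▸ mem_image_of_mem φ (mem_filter.mpr ⟨hb', hadj⟩))
    · rcases mem_insert.mp hb with rfl | hb'
      · have hau : a ≠ b := fun h => huA (h ▸ ha')
        rw [Function.update_self, Function.update_of_ne hau]
        intro he
        exact hx (he.symm ▸ mem_image_of_mem φ (mem_filter.mpr ⟨ha', hadj.symm⟩))
      · have hau : a ≠ u := fun h => huA (h ▸ ha')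
        have hbu : b ≠ u := fun h => huA (h ▸ hb')
        rw [Function.update_of_ne hau, Function.update_of_ne hbu]
        exact hgood.1 a ha' b hb' hadj
  -- for every available color there is an "almost rainbow" independent set
  have hJ : ∀ x : Fin c, x ∉ N.image φ → ∃ J, J ⊆ A ∧ IndSet G J ∧
      (∀ j ∈ J, ¬ G.Adj u j) ∧ J.image φ = Finset.univ.erase x := by
    intro x hx
    obtain ⟨I, hIsub, hind, hcard⟩ : ∃ I, I ⊆ insert u A ∧ IndSet G I ∧
        c ≤ (I.image (Function.update φ u x)).card := by
      rcases not_and_or.mp (hbad x) with h | h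
      · exact absurd (hproper x hx) h
      · push_neg at h
        obtain ⟨I, hI1, hI2, hI3⟩ := h
        exact ⟨I, hI1, hI2, hI3⟩
    have huI : u ∈ I := by
      by_contra huI
      have hIA : I ⊆ A := fun a ha =>
        (mem_insert.mp (hIsub ha)).resolve_left (fun h => huI (by rwa [h] at ha))
      have himeq : I.image (Function.update φ u x) = I.image φ :=
        image_congr (fun a ha => Function.update_of_ne (fun h => huI (by rwa [h] at ha)) _ _)
      rw [himeq] at hcard
      have := hgood.2 I hIA hind
      omega
    set J := I.erase u with hJdef
    have hJA : J ⊆ A := by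
      intro a ha
      exact (mem_insert.mp (hIsub (mem_of_mem_erase ha))).resolve_left (mem_erase.mp ha).1
    have hJind : IndSet G J := fun a ha b hb hab =>
      hind a (mem_of_mem_erase ha) b (mem_of_mem_erase hb) hab
    have hJnadj : ∀ j ∈ J, ¬ G.Adj u j := fun j hj =>
      hind u huI j (mem_of_mem_erase hj) (fun h => (mem_erase.mp hj).1 h.symm)
    have hIJ : I = insert u J := (insert_erase huI).symm
    have him : I.image (Function.update φ u x) = insert x (J.image φ) := by
      rw [hIJ, image_insert, Function.update_self]
      congr 1
      exact image_congr (fun a ha => Function.update_of_ne (mem_erase.mp ha).1 _ _)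
    have hQ1J := hgood.2 J hJA hJind
    have hxnotin : x ∉ J.image φ := by
      intro hxin
      rw [him, insert_eq_self.mpr hxin] at hcard
      omega
    have hcardJ : c - 1 ≤ (J.image φ).card := by
      rw [him, card_insert_of_notMem hxnotin] at hcard
      omega
    have hsub2 : J.image φ ⊆ Finset.univ.erase x :=
      fun a ha => mem_erase.mpr ⟨fun h => hxnotin (h ▸ ha), mem_univ a⟩
    have heq : J.image φ = Finset.univ.erase x := by
      apply eq_of_subset_of_card_le hsub2
      rw [card_erase_of_mem (mem_univ x), card_univ, Fintype.card_fin]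
      omega
    exact ⟨J, hJA, hJind, hJnadj, heq⟩
  -- package via choice
  have h5 : ∀ x : Fin c, ∃ J : Finset V, x ∉ N.image φ → J ⊆ A ∧ IndSet G J ∧
      (∀ j ∈ J, ¬ G.Adj u j) ∧ J.image φ = Finset.univ.erase x := by
    intro x
    by_cases hx : x ∈ N.image φ
    · exact ⟨∅, fun h => absurd hx h⟩
    · obtain ⟨J, h1, h2, h3, h4⟩ := hJ x hx
      exact ⟨J, fun _ => ⟨h1, h2, h3, h4⟩⟩
  choose Jf hJf using h5
  set X : Finset (Fin c) := Finset.univ \ N.image φ with hXdef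
  have hXmem : ∀ x ∈ X, x ∉ N.image φ := fun x hx => (mem_sdiff.mp hx).2
  have hXcard : X.card = c - (N.image φ).card := by
    rw [hXdef, card_sdiff_of_subset (subset_univ _), card_univ, Fintype.card_fin]
  -- the selector function
  set F : Fin c → Fin c → V := fun y x => if h : ∃ v ∈ Jf x, φ v = y then h.choose else u
    with hFdef
  have hFmem : ∀ (x y : Fin c), x ∉ N.image φ → y ≠ x → F y x ∈ Jf x ∧ φ (F y x) = y := by
    intro x y hx hy
    have hex : ∃ v ∈ Jf x, φ v = y := by
      have h1 : y ∈ (Jf x).image φ := by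
        rw [(hJf x hx).2.2.2]
        exact mem_erase.mpr ⟨hy, mem_univ y⟩
      exact mem_image.mp h1
    simp only [hFdef, dif_pos hex]
    exact ⟨hex.choose_spec.1, hex.choose_spec.2⟩
  set W : Finset V := X.biUnion Jf with hWdef
  have hWA : W ⊆ A := by
    intro a ha
    obtain ⟨x, hx, hax⟩ := mem_biUnion.mp ha
    exact (hJf x (hXmem x hx)).1 hax
  have hWnadj : ∀ a ∈ W, ¬ G.Adj u a := by
    intro a ha
    obtain ⟨x, hx, hax⟩ := mem_biUnion.mp ha
    exact (hJf x (hXmem x hx)).2.2.1 a hax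
  -- counting
  have hcount : N.card + W.card + 1 ≤ 2 * c - 2 := by
    have hdisj : Disjoint N W := by
      rw [Finset.disjoint_left]
      intro a haN haW
      exact hWnadj a haW (hNmem a haN)
    have hsubB : insert u (N ∪ W) ⊆ B := by
      intro a ha
      rcases mem_insert.mp ha with rfl | ha'
      · exact huB
      · rcases mem_union.mp ha' with h | h
        · exact hAB (hNA h)
        · exact hAB (hWA h)
    have huNW : u ∉ N ∪ W := by
      intro h
      rcases mem_union.mp h with h' | h'
      · exact huA (hNA h')
      · exact huA (hWA h')
    have h1 := card_le_card hsubB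
    rw [card_insert_of_notMem huNW, card_union_of_disjoint hdisj] at h1
    omega
  have hsumW : ∑ y : Fin c, ((X.erase y).image (F y)).card ≤ W.card := by
    have hsub : ∀ y : Fin c, (X.erase y).image (F y) ⊆ W.filter (fun v => φ v = y) := by
      intro y a ha
      obtain ⟨x, hx, rfl⟩ := mem_image.mp ha
      have hxX : x ∈ X := mem_of_mem_erase hx
      have hyx : y ≠ x := fun h => (mem_erase.mp hx).1 h.symm
      obtain ⟨h1, h2⟩ := hFmem x y (hXmem x hxX) hyx
      exact mem_filter.mpr ⟨mem_biUnion.mpr ⟨x, hxX, h1⟩, h2⟩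
    calc ∑ y : Fin c, ((X.erase y).image (F y)).card
        ≤ ∑ y : Fin c, (W.filter (fun v => φ v = y)).card :=
          Finset.sum_le_sum (fun y _ => card_le_card (hsub y))
      _ = W.card := (Finset.card_eq_sum_card_fiberwise (fun v _ => mem_univ (φ v))).symm
  have himgN : (N.image φ).card ≤ N.card := card_image_le
  -- small cases k ≤ 2 are impossible by counting
  have hk1 : 1 ≤ X.card := by omega
  by_cases hk3 : 3 ≤ X.card
  · -- main case : apply the combinatorial lemma
    have hc2hyp : ∑ y : Fin c, ((X.erase y).image (F y)).card ≤
        Fintype.card (Fin c) + X.card - 3 := by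
      rw [Fintype.card_fin]
      omega
    obtain ⟨ξ, hξ1, hξ2⟩ := claimC2' X hk3 F hc2hyp
    set R : Finset V := Finset.univ.image (fun y => F y (ξ y)) with hRdef
    have hmemfacts : ∀ y : Fin c, F y (ξ y) ∈ Jf (ξ y) ∧ φ (F y (ξ y)) = y := by
      intro y
      have h1 := hξ1 y
      have hxX : ξ y ∈ X := mem_of_mem_erase h1
      exact hFmem (ξ y) y (hXmem _ hxX) (fun h => (mem_erase.mp h1).1 h.symm)
    have hRA : R ⊆ A := by
      intro a ha
      obtain ⟨y, _, rfl⟩ := mem_image.mp ha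
      exact (hJf (ξ y) (hXmem _ (mem_of_mem_erase (hξ1 y)))).1 (hmemfacts y).1
    have hRind : IndSet G R := by
      intro a ha b hb hab hadj
      obtain ⟨y, _, rfl⟩ := mem_image.mp ha
      obtain ⟨y', _, rfl⟩ := mem_image.mp hb
      have hyy' : y ≠ y' := fun h => hab (h ▸ rfl)
      obtain ⟨x, hx1, hx2, he1, he2⟩ := hξ2 y y' hyy'
      have hxX : x ∈ X := mem_of_mem_erase hx1
      have hy1 : y ≠ x := fun h => (mem_erase.mp hx1).1 h.symm
      have hy2 : y' ≠ x := fun h => (mem_erase.mp hx2).1 h.symm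
      have hm1 := (hFmem x y (hXmem x hxX) hy1).1
      have hm2 := (hFmem x y' (hXmem x hxX) hy2).1
      rw [he1] at hm1
      rw [he2] at hm2
      exact (hJf x (hXmem x hxX)).2.1 _ hm1 _ hm2 hab hadj
    have himgR : (Finset.univ : Finset (Fin c)) ⊆ R.image φ := by
      intro y _
      exact mem_image.mpr ⟨F y (ξ y), mem_image_of_mem _ (mem_univ y), (hmemfacts y).2⟩
    have h1 := card_le_card himgR
    rw [card_univ, Fintype.card_fin] at h1
    have h2 := hgood.2 R hRA hRind
    omega
  · -- k ≤ 2
    obtain ⟨x1, hx1X⟩ := card_pos.mp (by omega : 0 < X.card)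
    have hx1 := hXmem x1 hx1X
    have hJ1 : c - 1 ≤ (Jf x1).card := by
      have h1 : ((Jf x1).image φ).card ≤ (Jf x1).card := card_image_le
      rw [(hJf x1 hx1).2.2.2, card_erase_of_mem (mem_univ x1), card_univ, Fintype.card_fin] at h1
      omega
    have hJ1W : Jf x1 ⊆ W := by
      intro a ha
      exact mem_biUnion.mpr ⟨x1, hx1X, ha⟩
    by_cases hk2 : X.card = 1
    · -- k = 1
      have hs : (N.image φ).card = c - 1 := by omega
      have hW1 : c - 1 ≤ W.card := le_trans hJ1 (card_le_card hJ1W)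
      omega
    · -- k = 2
      have hk2' : X.card = 2 := by omega
      obtain ⟨x2, hx2X, hx12⟩ : ∃ x2 ∈ X, x2 ≠ x1 := by
        obtain ⟨a, ha, b, hb, hab⟩ := one_lt_card.mp (by omega : 1 < X.card)
        by_cases h : a = x1
        · exact ⟨b, hb, fun hh => hab (h ▸ hh ▸ rfl)⟩
        · exact ⟨a, ha, h⟩
      have hx2 := hXmem x2 hx2X
      -- a vertex of color x2 inside Jf x1
      obtain ⟨v, hv, hφv⟩ : ∃ v ∈ Jf x1, φ v = x2 := by
        have h1 : x2 ∈ (Jf x1).image φ := by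
          rw [(hJf x1 hx1).2.2.2]
          exact mem_erase.mpr ⟨hx12, mem_univ x2⟩
        exact mem_image.mp h1
      have hvJ2 : v ∉ Jf x2 := by
        intro hv2
        have h1 : x2 ∈ (Jf x2).image φ := mem_image.mpr ⟨v, hv2, hφv⟩
        rw [(hJf x2 hx2).2.2.2] at h1
        exact (mem_erase.mp h1).1 rfl
      have hJ2 : c - 1 ≤ (Jf x2).card := by
        have h1 : ((Jf x2).image φ).card ≤ (Jf x2).card := card_image_le
        rw [(hJf x2 hx2).2.2.2, card_erase_of_mem (mem_univ x2), card_univ,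
          Fintype.card_fin] at h1
        omega
      have hins : insert v (Jf x2) ⊆ W := by
        intro a ha
        rcases mem_insert.mp ha with rfl | ha'
        · exact mem_biUnion.mpr ⟨x1, hx1X, hv⟩
        · exact mem_biUnion.mpr ⟨x2, hx2X, ha'⟩
      have hWc : c ≤ W.card := by
        have h1 := card_le_card hins
        rw [card_insert_of_notMem hvJ2] at h1
        omega
      have hs : (N.image φ).card = c - 2 := by omega
      omega

/-- A good coloring of a subset of a bag extends to the whole bag. -/
lemma extend_on_bag {V : Type} [DecidableEq V] {G : SimpleGraph V}
    (hfree : G.CliqueFree 3) {c : ℕ} (hc : 1 ≤ c) {B : Finset V}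
    (hB : B.card ≤ 2 * c - 2) :
    ∀ (n : ℕ) (A : Finset V), A ⊆ B → (B \ A).card ≤ n → ∀ φ : V → Fin c, GoodOn G c φ A →
    ∃ ψ : V → Fin c, (∀ a ∈ A, ψ a = φ a) ∧ GoodOn G c ψ B := by
  intro n
  induction n with
  | zero =>
    intro A hAB hcard φ hgood
    have hBA : B ⊆ A := by
      intro b hb
      by_contra hbA
      have : b ∈ B \ A := mem_sdiff.mpr ⟨hb, hbA⟩
      have := card_pos.mpr ⟨b, this⟩
      omega
    exact ⟨φ, fun a _ => rfl, hgood.mono hBA⟩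
  | succ n ih =>
    intro A hAB hcard φ hgood
    by_cases hBA : B ⊆ A
    · exact ⟨φ, fun a _ => rfl, hgood.mono hBA⟩
    · obtain ⟨u, hu⟩ : ∃ u, u ∈ B \ A := by
        rw [not_subset] at hBA
        obtain ⟨u, h1, h2⟩ := hBA
        exact ⟨u, mem_sdiff.mpr ⟨h1, h2⟩⟩
      have huB := (mem_sdiff.mp hu).1
      have huA := (mem_sdiff.mp hu).2
      obtain ⟨x, hx⟩ := exists_extend_color hfree hc hAB hB huB huA φ hgood
      have hsub' : insert u A ⊆ B := insert_subset huB hAB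
      have hcard' : (B \ insert u A).card ≤ n := by
        have h1 : B \ insert u A = (B \ A).erase u := by
          ext a
          simp only [mem_sdiff, mem_erase, mem_insert, not_or]
          tauto
        rw [h1, card_erase_of_mem hu]
        omega
      obtain ⟨ψ, hψ1, hψ2⟩ := ih (insert u A) hsub' hcard' (Function.update φ u x) hx
      refine ⟨ψ, fun a ha => ?_, hψ2⟩
      rw [hψ1 a (mem_insert_of_mem ha), Function.update_of_ne (fun h => huA (by rwa [h] at ha))]

end Col

section Tree

variable {ι : Type} [DecidableEq ι] {T : SimpleGraph ι}

/-- The canonical path between two vertices of a tree. -/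
noncomputable def pth (hT : T.IsTree) (a b : ι) : T.Walk a b :=
  (hT.isConnected.preconnected a b).some.bypass

lemma pth_isPath (hT : T.IsTree) (a b : ι) : (pth hT a b).IsPath :=
  SimpleGraph.Walk.bypass_isPath _

lemma path_eq_pth (hT : T.IsTree) {a b : ι} (p : T.Walk a b) (hp : p.IsPath) :
    p = pth hT a b := by
  have := hT.IsAcyclic.path_unique ⟨p, hp⟩ ⟨pth hT a b, pth_isPath hT a b⟩
  exact congrArg Subtype.val this

lemma pth_length (hT : T.IsTree) (a b : ι) : (pth hT a b).length = T.dist a b := by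
  obtain ⟨w, hw⟩ := hT.isConnected.exists_walk_length_eq_dist a b
  have hwp : w.IsPath := w.isPath_of_length_eq_dist hw
  rw [← path_eq_pth hT w hwp]
  exact hw

lemma takeUntil_eq_pth (hT : T.IsTree) {a b x : ι} (hx : x ∈ (pth hT a b).support) :
    (pth hT a b).takeUntil x hx = pth hT a x :=
  path_eq_pth hT _ ((pth_isPath hT a b).takeUntil hx)

lemma dropUntil_eq_pth (hT : T.IsTree) {a b x : ι} (hx : x ∈ (pth hT a b).support) :
    (pth hT a b).dropUntil x hx = pth hT x b :=
  path_eq_pth hT _ ((pth_isPath hT a b).dropUntil hx)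

lemma dist_add_of_mem_pth (hT : T.IsTree) {a b x : ι} (hx : x ∈ (pth hT a b).support) :
    T.dist a x + T.dist x b = T.dist a b := by
  have hspec := ((pth hT a b).take_spec hx).symm
  have hlen : ((pth hT a b).takeUntil x hx).length + ((pth hT a b).dropUntil x hx).length
      = (pth hT a b).length := by
    conv_rhs => rw [hspec]
    rw [SimpleGraph.Walk.length_append]
  rw [takeUntil_eq_pth hT hx, dropUntil_eq_pth hT hx, pth_length, pth_length, pth_length] at hlen
  exact hlen

lemma dist_zero_eq (hT : T.IsTree) {a b : ι} (h : T.dist a b = 0) : a = b :=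
  ((hT.isConnected.preconnected a b).dist_eq_zero_iff).mp h

/-- If `x` is nearer than `y` on the path `r → b` then `y` is on the path `x → b`. -/
lemma mem_pth_suffix (hT : T.IsTree) {r b x y : ι}
    (hx : x ∈ (pth hT r b).support) (hy : y ∈ (pth hT r b).support)
    (hle : T.dist r x ≤ T.dist r y) : y ∈ (pth hT x b).support := by
  rw [← (pth hT r b).take_spec hx, SimpleGraph.Walk.mem_support_append_iff] at hy
  rcases hy with hy | hy
  · rw [takeUntil_eq_pth hT hx] at hy
    have h1 := dist_add_of_mem_pth hT hy
    have h2 : y = x := by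
      apply dist_zero_eq hT
      omega
    subst h2
    exact SimpleGraph.Walk.start_mem_support _
  · rw [dropUntil_eq_pth hT hx] at hy
    exact hy

/-- If `x` is nearer than `y` on the path `r → b` then `x` is on the path `r → y`. -/
lemma mem_pth_prefix (hT : T.IsTree) {r b x y : ι}
    (hx : x ∈ (pth hT r b).support) (hy : y ∈ (pth hT r b).support)
    (hle : T.dist r x ≤ T.dist r y) : x ∈ (pth hT r y).support := by
  have hx' := hx
  rw [← (pth hT r b).take_spec hy, SimpleGraph.Walk.mem_support_append_iff] at hx'
  rcases hx' with hx' | hx'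
  · rw [takeUntil_eq_pth hT hy] at hx'
    exact hx'
  · rw [dropUntil_eq_pth hT hy] at hx'
    have h0 := dist_add_of_mem_pth hT hx
    have h1 := dist_add_of_mem_pth hT hx'
    have h2 := dist_add_of_mem_pth hT hy
    have h4 : x = y := by
      have : T.dist y x = 0 := by omega
      exact (dist_zero_eq hT this).symm
    subst h4
    exact SimpleGraph.Walk.end_mem_support _

/-- For an edge `z ~ z'`, one endpoint's root-path contains the other endpoint. -/
lemma edge_mem_pth (hT : T.IsTree) (r : ι) {z z' : ι} (h : T.Adj z z') :
    z' ∈ (pth hT r z).support ∨ z ∈ (pth hT r z').support := by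
  by_cases hz' : z' ∈ (pth hT r z).support
  · exact Or.inl hz'
  · right
    have hcp : ((pth hT r z).concat h).IsPath := by
      rw [SimpleGraph.Walk.isPath_def, SimpleGraph.Walk.support_concat]
      have hnd := pth_isPath hT r z
      rw [SimpleGraph.Walk.isPath_def] at hnd
      simp only [List.concat_eq_append, List.nodup_append, List.nodup_cons, List.not_mem_nil,
        not_false_iff, List.nodup_nil, and_true, hnd, true_and]
      intro a ha b hmem
      simp only [List.mem_cons, List.not_mem_nil, or_false] at hmem
      subst hmem
      intro hab
      subst hab
      exact hz' ha
    have heq := path_eq_pth hT _ hcp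
    rw [← heq, SimpleGraph.Walk.support_concat]
    simp only [List.concat_eq_append, List.mem_append, List.mem_cons]
    exact Or.inl (SimpleGraph.Walk.end_mem_support _)

lemma exists_gate (hT : T.IsTree) (r : ι) (S : Set ι) (hne : S.Nonempty) :
    ∃ g ∈ S, ∀ j ∈ S, T.dist r g ≤ T.dist r j := by
  classical
  set D : Set ℕ := (fun i => T.dist r i) '' S with hD
  have hDne : D.Nonempty := hne.image _
  obtain ⟨g, hgS, hgd⟩ := Nat.sInf_mem hDne
  refine ⟨g, hgS, fun j hj => ?_⟩
  have hgd' : T.dist r g = sInf D := hgd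
  rw [hgd']
  exact Nat.sInf_le ⟨j, hj, rfl⟩

lemma pth_support_subset (hT : T.IsTree) {S : Set ι} (hconn : (T.induce S).Connected)
    {a b : ι} (ha : a ∈ S) (hb : b ∈ S) : ∀ x ∈ (pth hT a b).support, x ∈ S := by
  have hr : (T.induce S).Reachable ⟨a, ha⟩ ⟨b, hb⟩ := hconn.preconnected _ _
  obtain ⟨w'⟩ := hr
  let f : T.induce S →g T := ⟨Subtype.val, fun {u v} huv => huv⟩
  let w : T.Walk a b := w'.map f
  have hsupp : ∀ x ∈ w.support, x ∈ S := by
    intro x hx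
    rw [SimpleGraph.Walk.support_map] at hx
    obtain ⟨y, _, rfl⟩ := List.mem_map.mp hx
    exact y.2
  have heq := path_eq_pth hT w.bypass (SimpleGraph.Walk.bypass_isPath w)
  intro x hx
  rw [← heq] at hx
  exact hsupp x (SimpleGraph.Walk.support_bypass_subset w hx)

/-- Gate property : the closest vertex of a connected set `S` to the root lies on
every root-path to a member of `S`. -/
lemma gate_mem_pth (hT : T.IsTree) {r : ι} {S : Set ι} (hconn : (T.induce S).Connected)
    {g : ι} (hgS : g ∈ S) (hmin : ∀ j ∈ S, T.dist r g ≤ T.dist r j)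
    {j : ι} (hj : j ∈ S) : g ∈ (pth hT r j).support := by
  suffices aux : ∀ (z j' : ι) (w : T.Walk z j'), (∀ x ∈ w.support, x ∈ S) →
      g ∈ (pth hT r z).support → g ∈ (pth hT r j').support by
    exact aux g j (pth hT g j) (pth_support_subset hT hconn hgS hj)
      (SimpleGraph.Walk.end_mem_support _)
  intro z j' w
  induction w with
  | nil =>
    intro _ hg
    exact hg
  | @cons z₁ z₂ z₃ hadj w ih =>
    intro hS hg
    have hz₂ : z₂ ∈ S := hS z₂ (by simp [SimpleGraph.Walk.support_cons])
    apply ih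
    · intro x hx
      exact hS x (by simp only [SimpleGraph.Walk.support_cons, List.mem_cons]; exact Or.inr hx)
    · rcases edge_mem_pth hT r hadj with hcase | hcase
      · exact mem_pth_prefix hT hg hcase (hmin z₂ hz₂)
      · have hsub := SimpleGraph.Walk.support_takeUntil_subset _ hcase
        rw [takeUntil_eq_pth hT hcase] at hsub
        exact hsub hg

end Tree

section Main

lemma GoodOn.congr {V : Type} {G : SimpleGraph V} {c : ℕ} {φ ψ : V → Fin c} {A : Finset V}
    (h : GoodOn G c φ A) (he : ∀ a ∈ A, ψ a = φ a) : GoodOn G c ψ A := by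
  constructor
  · intro a ha b hb hadj
    rw [he a ha, he b hb]
    exact h.1 a ha b hb hadj
  · intro I hI hind
    rw [Finset.image_congr (fun a ha => he a (hI ha))]
    exact h.2 I hI hind

/-- `G` has a tree decomposition of width at most `t`: a tree `T` on index type `ι`
with bags `bag : ι → Finset V` covering every edge, whose supports
`{i | v ∈ bag i}` are nonempty and induce connected subgraphs of `T`,
and with every bag of size at most `t + 1`. -/
def HasTreewidthAtMost {V : Type} [Fintype V] (G : SimpleGraph V) (t : ℕ) : Prop :=
  ∃ (ι : Type) (T : SimpleGraph ι) (bag : ι → Finset V),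
    T.IsTree ∧
    (∀ ⦃u v : V⦄, G.Adj u v → ∃ i, u ∈ bag i ∧ v ∈ bag i) ∧
    (∀ v : V, ∃ i, v ∈ bag i) ∧
    (∀ v : V, (T.induce {i | v ∈ bag i}).Connected) ∧
    (∀ i, (bag i).card ≤ t + 1)

theorem main_colorable {V : Type} [Fintype V] (G : SimpleGraph V) (t c : ℕ) (hc : 1 ≤ c)
    (htc : t + 1 ≤ 2 * c - 2) (htw : HasTreewidthAtMost G t) (hfree : G.CliqueFree 3) :
    G.Colorable c := by
  classical
  obtain ⟨ι, T, bag, hT, hedge, hvert, hconn, hbag⟩ := htw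
  have hι : Nonempty ι := hT.isConnected.nonempty
  obtain ⟨r₀⟩ := hι
  -- the gate of each vertex's support
  have hgate : ∀ v : V, ∃ gv : ι, gv ∈ {i | v ∈ bag i} ∧
      ∀ j ∈ {i : ι | v ∈ bag i}, T.dist r₀ gv ≤ T.dist r₀ j := by
    intro v
    obtain ⟨g, h1, h2⟩ := exists_gate hT r₀ {i | v ∈ bag i} (hvert v)
    exact ⟨g, h1, h2⟩
  choose g hg1 hg2 using hgate
  set d : V → ℕ := fun v => T.dist r₀ (g v) with hd
  -- K1 : the gate lies on every root-path to a bag containing v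
  have hK1 : ∀ v i, v ∈ bag i → g v ∈ (pth hT r₀ i).support := by
    intro v i hv
    exact gate_mem_pth hT (hconn v) (hg1 v) (hg2 v) hv
  -- K2 : d v ≤ dist to any bag containing v
  have hK2 : ∀ v i, v ∈ bag i → d v ≤ T.dist r₀ i := by
    intro v i hv
    exact hg2 v i hv
  -- K3 : for adjacent-ish vertices sharing a bag, the deeper gate's bag contains both
  have hK3 : ∀ u v j, u ∈ bag j → v ∈ bag j → d u ≤ d v → u ∈ bag (g v) := by
    intro u v j huj hvj hle
    have h1 := hK1 u j huj
    have h2 := hK1 v j hvj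
    have h3 : g v ∈ (pth hT (g u) j).support := mem_pth_suffix hT h1 h2 hle
    exact pth_support_subset hT (hconn u) (hg1 u) huj (g v) h3
  -- K4 : uniqueness of position
  have hK4 : ∀ v i, v ∈ bag i → d v = T.dist r₀ i → g v = i := by
    intro v i hv hdv
    have h1 := hK1 v i hv
    have h2 := dist_add_of_mem_pth hT h1
    apply dist_zero_eq hT
    have : d v = T.dist r₀ (g v) := rfl
    omega
  -- K5 : predecessor bags
  have hK5 : ∀ i : ι, 1 ≤ T.dist r₀ i → ∃ p : ι, T.dist r₀ p + 1 = T.dist r₀ i ∧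
      ∀ v ∈ bag i, d v < T.dist r₀ i → v ∈ bag p := by
    intro i hi
    set q := pth hT r₀ i with hq
    have hlen : q.length = T.dist r₀ i := pth_length hT r₀ i
    set p := q.getVert (q.length - 1) with hp
    have hpsupp : p ∈ q.support :=
      SimpleGraph.Walk.mem_support_iff_exists_getVert.mpr ⟨q.length - 1, rfl, by omega⟩
    have hadj : T.Adj p i := by
      have h1 : q.length - 1 < q.length := by omega
      have h2 := q.adj_getVert_succ h1
      have h3 : q.length - 1 + 1 = q.length := by omega
      rw [h3, SimpleGraph.Walk.getVert_length] at h2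
      exact h2
    have hdp : T.dist r₀ p + 1 = T.dist r₀ i := by
      have h1 := dist_add_of_mem_pth hT hpsupp
      have h2 : T.dist p i = 1 := SimpleGraph.dist_eq_one_iff_adj.mpr hadj
      omega
    refine ⟨p, hdp, ?_⟩
    intro v hv hdv
    have hgv := hK1 v i hv
    have hle : T.dist r₀ (g v) ≤ T.dist r₀ p := by
      have : d v = T.dist r₀ (g v) := rfl
      omega
    have hmem := mem_pth_suffix hT hgv hpsupp hle
    exact pth_support_subset hT (hconn v) (hg1 v) hv p hmem
  -- the phase induction
  have phase : ∀ ℓ : ℕ, ∃ φ : V → Fin c, ∀ i : ι, T.dist r₀ i < ℓ →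
      GoodOn G c φ (bag i) := by
    intro ℓ
    induction ℓ with
    | zero => exact ⟨fun _ => ⟨0, hc⟩, fun i h => absurd h (by omega)⟩
    | succ ℓ ih =>
      obtain ⟨φ, Hφ⟩ := ih
      have hext : ∀ i : ι, ∃ ψ : V → Fin c, T.dist r₀ i = ℓ →
          ((∀ a ∈ (bag i).filter (fun v => d v < ℓ), ψ a = φ a) ∧ GoodOn G c ψ (bag i)) := by
        intro i
        by_cases hi : T.dist r₀ i = ℓ
        · set A := (bag i).filter (fun v => d v < ℓ) with hA
          have hAB : A ⊆ bag i := Finset.filter_subset _ _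
          have hAgood : GoodOn G c φ A := by
            rcases Nat.eq_zero_or_pos ℓ with h0 | hpos
            · have hemp : A = ∅ := by
                apply Finset.eq_empty_iff_forall_notMem.mpr
                intro v hv
                have := (Finset.mem_filter.mp hv).2
                omega
              constructor
              · intro a ha
                rw [hemp] at ha
                exact absurd ha (Finset.notMem_empty a)
              · intro I hI hind
                rw [hemp] at hI
                rw [Finset.subset_empty.mp hI]
                simp; omega
            · obtain ⟨p, hdp, hmemp⟩ := hK5 i (by omega)
              have hAp : A ⊆ bag p := by
                intro v hv
                exact hmemp v (Finset.mem_filter.mp hv).1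
                  (by have := (Finset.mem_filter.mp hv).2; omega)
              exact (Hφ p (by omega)).mono hAp
          obtain ⟨ψ, hψ1, hψ2⟩ := extend_on_bag hfree hc (le_trans (hbag i) htc)
            ((bag i \ A).card) A hAB (le_refl _) φ hAgood
          exact ⟨ψ, fun _ => ⟨hψ1, hψ2⟩⟩
        · exact ⟨φ, fun h => absurd h hi⟩
      choose Ψ hΨ using hext
      refine ⟨fun v => if d v = ℓ then Ψ (g v) v else φ v, ?_⟩
      intro i hi
      rcases Nat.lt_succ_iff_lt_or_eq.mp hi with hlt | heq
      · apply (Hφ i hlt).congr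
        intro a ha
        have hda : d a < ℓ := lt_of_le_of_lt (hK2 a i ha) hlt
        simp only [if_neg (by omega : ¬ d a = ℓ)]
      · apply ((hΨ i heq).2).congr
        intro a ha
        by_cases hda : d a = ℓ
        · have hgai : g a = i := hK4 a i ha (by omega)
          simp only [if_pos hda, hgai]
        · have hda' : d a < ℓ := by
            have := hK2 a i ha
            omega
          have h1 := (hΨ i heq).1 a (Finset.mem_filter.mpr ⟨ha, hda'⟩)
          simp only [if_neg hda]
          exact h1.symm
  -- conclude
  obtain ⟨φ, Hφ⟩ := phase ((Finset.univ.sup d) + 1)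
  have key : ∀ u v : V, G.Adj u v → d u ≤ d v → φ u ≠ φ v := by
    intro u v hadj hle
    obtain ⟨j, huj, hvj⟩ := hedge hadj
    have hu : u ∈ bag (g v) := hK3 u v j huj hvj hle
    have hv : v ∈ bag (g v) := hg1 v
    have hgd : T.dist r₀ (g v) < Finset.univ.sup d + 1 := by
      have h1 : d v ≤ Finset.univ.sup d := Finset.le_sup (Finset.mem_univ v)
      have h2 : T.dist r₀ (g v) = d v := rfl
      omega
    exact (Hφ (g v) hgd).1 u hu v hv hadj
  have hproper : ∀ {u v : V}, G.Adj u v → φ u ≠ φ v := by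
    intro u v hadj
    rcases le_total (d u) (d v) with h | h
    · exact key u v hadj h
    · exact fun he => key v u hadj.symm h he.symm
  exact ⟨SimpleGraph.Coloring.mk φ (fun {a b} hadj => hproper hadj)⟩

/-- every triangle-free graph of tree-width at most `t` (`t ≥ 1`) has
chromatic number at most `⌈(t+3)/2⌉` (note `⌈(t+3)/2⌉ = (t+4)/2` in ℕ). -/
theorem trianglefree_treewidth_chromatic {V : Type} [Fintype V] (G : SimpleGraph V)
    (t : ℕ) (ht : 1 ≤ t) (htw : HasTreewidthAtMost G t) (hfree : G.CliqueFree 3) :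
    G.chromaticNumber ≤ ((t + 4) / 2 : ℕ) := by
  have hcol : G.Colorable ((t + 4) / 2) := by
    apply main_colorable G t _ (by omega) (by omega) htw hfree
  exact hcol.chromaticNumber_le

end Main
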